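/- Let n and k be natural numbers with 0 < k < n, let a_{k+1}, …, a_n be integers ≥ 1, and let d = gcd(a_{k+1}, …, a_n). In the free abelian group G = ((Fin k × Fin (n−k)) → ℤ), with coordinates indexed by pairs (i,l) with 1 ≤ i ≤ k and 1 ≤ l ≤ n−k, let H be the subgroup generated by the following n vectors: for each y ∈ {1,…,k}, the vector C_y whose (i,l)-entry is a_{k+l} if i = y and 0 otherwise; and for each l₀ ∈ {1,…,n−k}, the vector D_{l₀} whose (i,l)-entry is 1 if l = l₀ and 0 otherwise. Then the quotient group G/H is isomorphic to ℤ^{k(n−k)−(n−1)} × (ℤ/dℤ)^{k−1}. (This quotient is the divisor class group cl(S) ≅ cl(K[S]) of the normal positive monoid S = ⟨u₁,…,uₙ | u₁⋯u_k = u_{k+1}^{a_{k+1}}⋯u_n^{a_n}⟩: the coordinates of G correspond to the minimal primes P_{y,z} of S, the vector C_y is the divisor of u_y, and D_{l₀} is the divisor of u_{k+l₀}.) -/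

import Mathlib

set_option maxHeartbeats 1600000

open Submodule

/-- `d = gcd(a_{k+1}, …, a_n)`. -/
def dGcd (n k : ℕ) (a : Fin n → ℕ) : ℕ :=
  Finset.univ.gcd fun l : Fin (n - k) => a ⟨k + l.val, by have := l.isLt; omega⟩

/-- For `y ∈ {1,…,k}`, the vector `C_y ∈ ℤ^{k(n-k)}` whose `(i,l)`-entry is `a_{k+l}`
if `i = y` and `0` otherwise (the divisor of `u_y`). -/
def vecC (n k : ℕ) (a : Fin n → ℕ) (y : Fin k) : (Fin k × Fin (n - k)) → ℤ :=
  fun p => if p.1 = y then (a ⟨k + p.2.val, by have := p.2.isLt; omega⟩ : ℤ) else 0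

/-- For `l₀ ∈ {1,…,n-k}`, the vector `D_{l₀} ∈ ℤ^{k(n-k)}` whose `(i,l)`-entry is `1`
if `l = l₀` and `0` otherwise (the divisor of `u_{k+l₀}`). -/
def vecD (n k : ℕ) (l₀ : Fin (n - k)) : (Fin k × Fin (n - k)) → ℤ :=
  fun p => if p.2 = l₀ then 1 else 0

theorem exists_bezout_sum {ι : Type*} [DecidableEq ι] (s : Finset ι) (f : ι → ℕ) :
    ∃ u : ι → ℤ, ∑ i ∈ s, u i * (f i : ℤ) = ((s.gcd f : ℕ) : ℤ) := by
  classical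
  induction s using Finset.induction_on with
  | empty => exact ⟨0, by simp⟩
  | @insert a s ha ih =>
    obtain ⟨u, hu⟩ := ih
    set x : ℤ := (f a : ℤ) with hx
    set y : ℤ := ((s.gcd f : ℕ) : ℤ) with hy
    refine ⟨fun i => if i = a then Int.gcdA x y else Int.gcdB x y * u i, ?_⟩
    rw [Finset.sum_insert ha, Finset.gcd_insert]
    have hg : ((GCDMonoid.gcd (f a) (s.gcd f) : ℕ) : ℤ) = x * Int.gcdA x y + y * Int.gcdB x y := by
      have h2 := Int.gcd_eq_gcd_ab x y
      have h3 : Int.gcd x y = Nat.gcd (f a) (s.gcd f) := by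
        simp [hx, hy, Int.gcd_natCast_natCast]
      rw [h3] at h2
      exact h2
    rw [hg]
    dsimp only
    rw [if_pos rfl, Finset.sum_congr rfl (fun i hi => by
      rw [if_neg (by rintro rfl; exact ha hi)])]
    have hsum : ∑ i ∈ s, Int.gcdB x y * u i * (f i : ℤ) = y * Int.gcdB x y := by
      rw [← hu, Finset.sum_mul]
      exact Finset.sum_congr rfl fun i _ => by ring
    rw [hsum, ← hx]
    ring

/-- quotient of a product by a product submodule. -/
noncomputable def quotProdEquiv {R M N : Type*} [CommRing R] [AddCommGroup M] [AddCommGroup N]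
    [Module R M] [Module R N] (p : Submodule R M) (q : Submodule R N) :
    ((M × N) ⧸ p.prod q) ≃ₗ[R] (M ⧸ p) × (N ⧸ q) := by
  refine LinearEquiv.ofBijective
    (Submodule.liftQ _ ((p.mkQ.comp (LinearMap.fst R M N)).prod (q.mkQ.comp (LinearMap.snd R M N)))
      (fun x hx => ?_)) ⟨?_, ?_⟩
  · obtain ⟨h1, h2⟩ := Submodule.mem_prod.mp hx
    simp only [LinearMap.mem_ker, LinearMap.prod_apply, Function.prod, LinearMap.comp_apply,
      LinearMap.fst_apply, LinearMap.snd_apply, Prod.mk_eq_zero, Submodule.mkQ_apply,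
      Submodule.Quotient.mk_eq_zero]
    exact ⟨h1, h2⟩
  · intro z w h
    obtain ⟨⟨zx, zy⟩, rfl⟩ := Submodule.Quotient.mk_surjective _ z
    obtain ⟨⟨wx, wy⟩, rfl⟩ := Submodule.Quotient.mk_surjective _ w
    simp only [Submodule.liftQ_apply, LinearMap.prod_apply, Function.prod, LinearMap.comp_apply,
      LinearMap.fst_apply, LinearMap.snd_apply, Prod.mk.injEq, Submodule.mkQ_apply] at h
    rw [Submodule.Quotient.eq] at h ⊢
    rw [Submodule.Quotient.eq] at h
    exact Submodule.mem_prod.mpr ⟨h.1, h.2⟩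
  · rintro ⟨zx, zy⟩
    obtain ⟨x, rfl⟩ := Submodule.Quotient.mk_surjective _ zx
    obtain ⟨y, rfl⟩ := Submodule.Quotient.mk_surjective _ zy
    exact ⟨Submodule.Quotient.mk (x, y), by simp⟩

def quotToAddSubgroupEquiv {M : Type*} [AddCommGroup M] (p : Submodule ℤ M) :
    (M ⧸ p.toAddSubgroup) ≃+ (M ⧸ p) :=
  { Equiv.refl _ with map_add' := fun _ _ => rfl }

def addPiSplitAt {ι : Type*} [DecidableEq ι] (i0 : ι) (Q : ι → Type*) [∀ i, AddZeroClass (Q i)] :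
    (∀ i, Q i) ≃+ Q i0 × ∀ j : {j // j ≠ i0}, Q j :=
  { Equiv.piSplitAt i0 Q with map_add' := fun _ _ => rfl }

def addPiProd {ι A B : Type*} [AddZeroClass A] [AddZeroClass B] :
    (ι → A × B) ≃+ (ι → A) × (ι → B) where
  toFun x := (fun i => (x i).1, fun i => (x i).2)
  invFun y := fun i => (y.1 i, y.2 i)
  left_inv _ := rfl
  right_inv _ := rfl
  map_add' _ _ := rfl

def addUncurry {a b M : Type*} [AddZeroClass M] : (a → b → M) ≃+ (a × b → M) :=
  { (Equiv.curry a b M).symm with map_add' := fun _ _ => rfl }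

theorem inner_equiv (m d : ℕ) (hd : 0 < d) (α : Fin m → ℤ)
    (hdvd : ∀ l, (d : ℤ) ∣ α l) (u : Fin m → ℤ) (hu : ∑ l, u l * α l = (d : ℤ)) :
    Nonempty (((Fin m → ℤ) ⧸ (span ℤ ({α} : Set (Fin m → ℤ)))) ≃+
      ((Fin (m - 1) → ℤ) × ZMod d)) := by
  have hd0 : (d : ℤ) ≠ 0 := by exact_mod_cast hd.ne'
  set β : Fin m → ℤ := fun l => α l / d with hβdef
  have hβ : ∀ l, α l = (d : ℤ) * β l := fun l => (Int.mul_ediv_cancel' (hdvd l)).symm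
  set f : (Fin m → ℤ) →ₗ[ℤ] ℤ :=
    { toFun := fun x => ∑ l, u l * x l
      map_add' := by intro x y; simp [mul_add, Finset.sum_add_distrib]
      map_smul' := by
        intro c x
        simp only [Pi.smul_apply, smul_eq_mul, RingHom.id_apply, Finset.mul_sum]
        exact Finset.sum_congr rfl fun i _ => by ring }
    with hfdef
  have hfapp : ∀ x, f x = ∑ l, u l * x l := fun x => rfl
  have hc : (d : ℤ) * f β = ∑ l, u l * α l := by
    rw [hfapp, Finset.mul_sum]
    exact Finset.sum_congr rfl fun l _ => by rw [hβ l]; ring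
  have hfβ : f β = 1 := by
    apply mul_left_cancel₀ hd0
    rw [hc, hu, mul_one]
  set K := LinearMap.ker f with hK
  have hmem : ∀ x : Fin m → ℤ, x - f x • β ∈ K := fun x => by
    rw [hK, LinearMap.mem_ker, map_sub, map_smul, hfβ, smul_eq_mul, mul_one, sub_self]
  set g : (Fin m → ℤ) →ₗ[ℤ] ℤ × K :=
    LinearMap.prod f ((LinearMap.id - (LinearMap.toSpanSingleton ℤ _ β).comp f).codRestrict K
      (fun x => by simpa using hmem x)) with hg
  have hgapp : ∀ x, g x = (f x, (⟨x - f x • β, hmem x⟩ : K)) := fun x => by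
    apply Prod.ext
    · rfl
    · apply Subtype.ext
      simp [hg, LinearMap.codRestrict, LinearMap.toSpanSingleton_apply]
  set e : (Fin m → ℤ) ≃ₗ[ℤ] ℤ × K :=
    { g with
      invFun := fun z => z.1 • β + (z.2 : Fin m → ℤ)
      left_inv := fun x => by
        rw [show g.toFun x = g x from rfl, hgapp]
        simp only
        abel
      right_inv := fun z => by
        obtain ⟨c, y, hy⟩ := z
        have hfy : f y = 0 := hy
        rw [show g.toFun _ = g _ from rfl, hgapp]
        have hf2 : f (c • β + y) = c := by
          rw [map_add, map_smul, hfβ, hfy, smul_eq_mul, mul_one, add_zero]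
        apply Prod.ext
        · exact hf2
        · apply Subtype.ext
          simp only [hf2]
          abel } with he
  have heapp : ∀ x, e x = g x := fun _ => rfl
  have : Module.Finite ℤ K := by infer_instance
  have : Module.Free ℤ K := by infer_instance
  have hrank : Module.finrank ℤ K = m - 1 := by
    have h1 : Module.finrank ℤ (Fin m → ℤ) = m := by
      rw [Module.finrank_fintype_fun_eq_card, Fintype.card_fin]
    have h2 : Module.finrank ℤ (ℤ × K) = 1 + Module.finrank ℤ K := by
      rw [Module.finrank_prod, Module.finrank_self]
    have h3 := e.finrank_eq
    rw [h1, h2] at h3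
    omega
  let bK := Module.Free.chooseBasis ℤ K
  have hcard : Fintype.card (Module.Free.ChooseBasisIndex ℤ K) = m - 1 := by
    rw [← Module.finrank_eq_card_chooseBasisIndex, hrank]
  let eK : K ≃ₗ[ℤ] (Fin (m - 1) → ℤ) :=
    (bK.reindex (Fintype.equivFinOfCardEq hcard)).equivFun
  have heα : e α = ((d : ℤ), (0 : K)) := by
    rw [heapp, hgapp]
    have hfα : f α = (d : ℤ) := by rw [hfapp]; exact hu
    apply Prod.ext
    · exact hfα
    · apply Subtype.ext
      show α - f α • β = 0
      rw [hfα]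
      funext l
      simp [hβ l]
  have hspan : Submodule.map (e : (Fin m → ℤ) →ₗ[ℤ] ℤ × K) (span ℤ ({α} : Set (Fin m → ℤ))) =
      (span ℤ ({(d : ℤ)} : Set ℤ)).prod (⊥ : Submodule ℤ K) := by
    rw [Submodule.map_span, Set.image_singleton, LinearEquiv.coe_coe, heα]
    apply le_antisymm
    · rw [span_le]
      rintro _ rfl
      exact ⟨mem_span_singleton_self _, rfl⟩
    · rintro ⟨x, y⟩ ⟨hx, hy⟩
      obtain ⟨c, rfl⟩ := mem_span_singleton.mp hx
      have hy0 : y = 0 := hy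
      subst hy0
      exact mem_span_singleton.mpr ⟨c, by simp⟩
  let q1 : ((Fin m → ℤ) ⧸ span ℤ ({α} : Set (Fin m → ℤ))) ≃ₗ[ℤ]
      ((ℤ × K) ⧸ (span ℤ ({(d : ℤ)} : Set ℤ)).prod (⊥ : Submodule ℤ K)) :=
    Submodule.Quotient.equiv _ _ e hspan
  let q2 := quotProdEquiv (span ℤ ({(d : ℤ)} : Set ℤ)) (⊥ : Submodule ℤ K)
  let q3 : (K ⧸ (⊥ : Submodule ℤ K)) ≃ₗ[ℤ] K := Submodule.quotEquivOfEqBot _ rfl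
  let q4 : (ℤ ⧸ span ℤ ({(d : ℤ)} : Set ℤ)) ≃+ ZMod d :=
    (Int.quotientSpanNatEquivZMod d).toAddEquiv
  exact ⟨q1.toAddEquiv.trans <| q2.toAddEquiv.trans <|
    (AddEquiv.prodCongr q4 (q3.trans eK).toAddEquiv).trans (AddEquiv.prodComm)⟩

theorem arith_aux (n k : ℕ) (hk : 0 < k) (hkn : k < n) :
    (k - 1) * ((n - k) - 1) = k * (n - k) - (n - 1) := by
  obtain ⟨K, rfl⟩ : ∃ K, k = K + 1 := ⟨k - 1, by omega⟩
  obtain ⟨M, hM⟩ : ∃ M, n - (K + 1) = M + 1 := ⟨n - K - 2, by omega⟩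
  rw [hM]
  have h1 : (K + 1) * (M + 1) = K * M + (K + M + 1) := by ring
  have h2 : n - 1 = K + M + 1 := by omega
  rw [h1, h2, Nat.add_sub_cancel]
  simp

theorem stmt6 (n k : ℕ) (hk : 0 < k) (hkn : k < n)
    (a : Fin n → ℕ) (ha : ∀ i : Fin n, k ≤ i.val → 1 ≤ a i)
    (H : AddSubgroup ((Fin k × Fin (n - k)) → ℤ))
    (hH : H = AddSubgroup.closure (Set.range (vecC n k a) ∪ Set.range (vecD n k))) :
    Nonempty ((((Fin k × Fin (n - k)) → ℤ) ⧸ H) ≃+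
      ((Fin (k * (n - k) - (n - 1)) → ℤ) × (Fin (k - 1) → ZMod (dGcd n k a)))) := by
  classical
  have hm : 0 < n - k := by omega
  set αN : Fin (n - k) → ℕ := fun l => a ⟨k + l.val, by have := l.isLt; omega⟩ with hαN
  set α : Fin (n - k) → ℤ := fun l => (αN l : ℤ) with hα
  set d : ℕ := dGcd n k a with hdd
  have hdgcd : d = Finset.univ.gcd αN := rfl
  have hd : 0 < d := by
    rcases Nat.eq_zero_or_pos d with h0 | h
    · exfalso
      have hall := Finset.gcd_eq_zero_iff.mp (hdgcd ▸ h0)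
      have h1 : αN ⟨0, hm⟩ = 0 := hall ⟨0, hm⟩ (Finset.mem_univ _)
      have h2 : 1 ≤ αN ⟨0, hm⟩ := ha ⟨k + 0, by omega⟩ (by simp)
      omega
    · exact h
  have hdvd : ∀ l, (d : ℤ) ∣ α l := fun l => by
    rw [hα, hdgcd]
    exact Int.natCast_dvd_natCast.mpr (Finset.gcd_dvd (Finset.mem_univ l))
  obtain ⟨u, hu⟩ := exists_bezout_sum Finset.univ αN
  rw [← hdgcd] at hu
  -- last row index
  set lst : Fin k := ⟨k - 1, by omega⟩ with hlst
  -- the change of coordinates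
  set Φ : ((Fin k × Fin (n - k)) → ℤ) ≃ₗ[ℤ] (Fin k → Fin (n - k) → ℤ) :=
    { toFun := fun x i l => if i = lst then x (i, l) else x (i, l) - x (lst, l)
      invFun := fun y q => if q.1 = lst then y q.1 q.2 else y q.1 q.2 + y lst q.2
      map_add' := by
        intro x y; funext i l
        by_cases h : i = lst <;> simp [h] <;> ring
      map_smul' := by
        intro c x; funext i l
        by_cases h : i = lst <;> simp [h] <;> ring
      left_inv := by
        intro x; funext q
        obtain ⟨i, l⟩ := q
        by_cases h : i = lst <;> simp [h]
      right_inv := by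
        intro y; funext i l
        by_cases h : i = lst <;> simp [h] } with hΦ
  have hΦapp : ∀ x i l, Φ x i l = if i = lst then x (i, l) else x (i, l) - x (lst, l) :=
    fun x i l => rfl
  -- images of generators
  have hΦC1 : ∀ y : Fin k, y ≠ lst →
      Φ (vecC n k a y) = fun i l => if i = y then α l else 0 := by
    intro y hy
    funext i l
    rw [hΦapp]
    by_cases h : i = lst
    · subst h
      simp [vecC, Ne.symm hy]
    · by_cases h2 : i = y <;> simp [vecC, h, h2, Ne.symm hy, hα, hαN]
  have hΦC2 : Φ (vecC n k a lst) = fun i l => if i = lst then α l else -α l := by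
    funext i l
    rw [hΦapp]
    by_cases h : i = lst <;> simp [vecC, h, hα, hαN]
  have hΦD : ∀ l₀, Φ (vecD n k l₀) =
      fun i l => if i = lst then (if l = l₀ then (1 : ℤ) else 0) else 0 := by
    intro l₀
    funext i l
    rw [hΦapp]
    by_cases h : i = lst <;> simp [vecD, h]
  -- the target submodule family
  set p : Fin k → Submodule ℤ (Fin (n - k) → ℤ) :=
    fun i => if i = lst then ⊤ else span ℤ ({α} : Set (Fin (n - k) → ℤ)) with hp
  set S : Set ((Fin k × Fin (n - k)) → ℤ) :=
    Set.range (vecC n k a) ∪ Set.range (vecD n k) with hS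
  have hmap : Submodule.map (Φ : ((Fin k × Fin (n - k)) → ℤ) →ₗ[ℤ] (Fin k → Fin (n - k) → ℤ)) (span ℤ S) = Submodule.pi Set.univ p := by
    rw [Submodule.map_span]
    apply le_antisymm
    · rw [span_le]
      rintro _ ⟨v, hv, rfl⟩
      show Φ v ∈ Submodule.pi Set.univ p
      rw [Submodule.mem_pi]
      intro i _
      by_cases hi : i = lst
      · simp [hp, hi]
      · rw [hp]
        simp only [if_neg hi]
        rcases hv with ⟨y, rfl⟩ | ⟨l₀, rfl⟩
        · by_cases hy : y = lst
          · subst hy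
            have := congrFun (hΦC2) i
            rw [this]
            simp only [if_neg hi]
            show -α ∈ span ℤ ({α} : Set (Fin (n - k) → ℤ))
            exact neg_mem (subset_span rfl)
          · have := congrFun (hΦC1 y hy) i
            rw [this]
            by_cases h2 : i = y
            · simp only [if_pos h2]
              exact subset_span rfl
            · simp only [if_neg h2]
              exact zero_mem _
        · have := congrFun (hΦD l₀) i
          rw [this]
          simp only [if_neg hi]
          exact zero_mem _
    · intro x hx
      rw [Submodule.mem_pi] at hx
      rw [← Finset.univ_sum_single x]
      apply sum_mem
      intro i _
      by_cases hi : i = lst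
      · subst hi
        have key : Pi.single lst (x lst) = ∑ l₀, (x lst l₀) • Φ (vecD n k l₀) := by
          funext i' l
          rw [Finset.sum_apply, Finset.sum_apply]
          simp only [Pi.smul_apply, smul_eq_mul]
          rw [Finset.sum_congr rfl (fun l₀ _ => by
            rw [congrFun (congrFun (hΦD l₀) i') l])]
          by_cases h : i' = lst
          · subst h
            simp [Pi.single_eq_same, Finset.sum_ite_eq]
          · simp [Pi.single_eq_of_ne h, h]
        rw [key]
        apply sum_mem
        intro l₀ _
        exact smul_mem _ _ (subset_span ⟨vecD n k l₀, Or.inr ⟨l₀, rfl⟩, rfl⟩)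
      · have hxi := hx i (Set.mem_univ i)
        rw [hp] at hxi
        simp only [if_neg hi] at hxi
        obtain ⟨c, hc⟩ := mem_span_singleton.mp hxi
        have key : Pi.single i (x i) = c • Φ (vecC n k a i) := by
          rw [hΦC1 i hi]
          funext i' l
          by_cases h : i' = i
          · subst h
            simp only [Pi.single_eq_same, Pi.smul_apply, smul_eq_mul, if_pos rfl]
            exact (congrFun hc l).symm
          · simp [Pi.single_eq_of_ne h, h]
        rw [key]
        exact smul_mem _ _ (subset_span ⟨vecC n k a i, Or.inl ⟨i, rfl⟩, rfl⟩)
  -- assemble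
  obtain ⟨einner⟩ := inner_equiv (n - k) d hd α hdvd u hu
  have E1 : (((Fin k × Fin (n - k)) → ℤ) ⧸ H) ≃+
      (((Fin k × Fin (n - k)) → ℤ) ⧸ (span ℤ S).toAddSubgroup) :=
    QuotientAddGroup.quotientAddEquivOfEq (by
      rw [hH, ← Submodule.span_int_eq_addSubgroupClosure, hS])
  have E2 := quotToAddSubgroupEquiv (span ℤ S)
  have E3 : ((((Fin k × Fin (n - k)) → ℤ)) ⧸ (span ℤ S)) ≃ₗ[ℤ]
      ((Fin k → Fin (n - k) → ℤ) ⧸ Submodule.pi Set.univ p) :=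
    Submodule.Quotient.equiv _ _ Φ hmap
  have E4 := Submodule.quotientPi p
  have E5 := addPiSplitAt lst (fun i => (Fin (n - k) → ℤ) ⧸ p i)
  haveI hsub : Subsingleton ((Fin (n - k) → ℤ) ⧸ p lst) := by
    rw [Submodule.Quotient.subsingleton_iff]
    simp [hp]
  haveI : Unique ((Fin (n - k) → ℤ) ⧸ p lst) := uniqueOfSubsingleton 0
  have E6 : ((Fin (n - k) → ℤ) ⧸ p lst) × (∀ j : {j : Fin k // j ≠ lst}, (Fin (n - k) → ℤ) ⧸ p j)
      ≃+ (∀ j : {j : Fin k // j ≠ lst}, (Fin (n - k) → ℤ) ⧸ p j) :=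
    AddEquiv.uniqueProd
  have E7 : (∀ j : {j : Fin k // j ≠ lst}, (Fin (n - k) → ℤ) ⧸ p j) ≃+
      (∀ _ : {j : Fin k // j ≠ lst}, (Fin (n - k) → ℤ) ⧸ span ℤ ({α} : Set (Fin (n - k) → ℤ))) :=
    AddEquiv.piCongrRight (fun j =>
      (Submodule.quotEquivOfEq _ _ (by rw [hp]; exact if_neg j.2)).toAddEquiv)
  have hcardsub : Fintype.card {j : Fin k // j ≠ lst} = k - 1 := by
    simp [Fintype.card_subtype_compl, Fintype.card_fin]
  have σ : {j : Fin k // j ≠ lst} ≃ Fin (k - 1) := Fintype.equivFinOfCardEq hcardsub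
  have E8 := AddEquiv.arrowCongr σ
    (AddEquiv.refl ((Fin (n - k) → ℤ) ⧸ span ℤ ({α} : Set (Fin (n - k) → ℤ))))
  have E9 := AddEquiv.arrowCongr (Equiv.refl (Fin (k - 1))) einner
  have E10 := (addPiProd : (Fin (k - 1) → (Fin (n - k - 1) → ℤ) × ZMod d) ≃+ _)
  have E11 : (Fin (k - 1) → (Fin (n - k - 1) → ℤ)) ≃+ (Fin (k * (n - k) - (n - 1)) → ℤ) :=
    addUncurry.trans (AddEquiv.arrowCongr
      ((finProdFinEquiv).trans (finCongr (arith_aux n k hk hkn))) (AddEquiv.refl ℤ))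
  exact ⟨E1.trans <| E2.trans <| E3.toAddEquiv.trans <| E4.toAddEquiv.trans <| E5.trans <|
    E6.trans <| E7.trans <| E8.trans <| E9.trans <| E10.trans <|
    AddEquiv.prodCongr E11 (AddEquiv.refl _)⟩
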